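/- Let G be a finite simple bipartite graph and let G' be obtained from G by adding a single new vertex a together with edges from a to every vertex of G. Then for every k ∈ ℕ, the number of edge-injective homomorphisms from the triangle packing k·K₃ to G' equals 6^k · k! · m_k(G), where m_k(G) is the number of k-matchings of G. -/

import Mathlib

open SimpleGraph

/-- A homomorphism `φ : H →g G` is *edge-injective* if distinct edges of `H`
are mapped to distinct edges of `G`. -/
def EdgeInjective {V W : Type*} {H : SimpleGraph V} {G : SimpleGraph W} (φ : H →g G) : Prop :=
  ∀ e ∈ H.edgeSet, ∀ f ∈ H.edgeSet, Sym2.map φ e = Sym2.map φ f → e = f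

/-- The triangle packing `k·K₃`: the disjoint union of `k` triangles. -/
def trianglePacking (k : ℕ) : SimpleGraph (Fin k × Fin 3) :=
  SimpleGraph.fromRel (fun x y => x.1 = y.1)

/-- Add a single apex vertex (`none`) adjacent to every vertex of `G`. -/
def addApex {V : Type*} (G : SimpleGraph V) : SimpleGraph (Option V) :=
  SimpleGraph.fromRel (fun x y =>
    (x = none ∧ y ≠ none) ∨ (∃ u v, x = some u ∧ y = some v ∧ G.Adj u v))

/-- The number of `k`-matchings of `G` (sets of `k` pairwise disjoint edges of `G`). -/
noncomputable def kMatchingCount {V : Type*} (G : SimpleGraph V) (k : ℕ) : ℕ :=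
  Nat.card {M : Finset (Sym2 V) // M.card = k ∧ ↑M ⊆ G.edgeSet ∧
    ∀ e ∈ M, ∀ f ∈ M, e ≠ f → ∀ x, x ∈ e → x ∉ f}

section Aux
variable {V : Type*} {G : SimpleGraph V}

lemma tp_adj {k : ℕ} {a b : Fin k × Fin 3} :
    (trianglePacking k).Adj a b ↔ a ≠ b ∧ a.1 = b.1 := by
  simp only [trianglePacking, fromRel_adj]
  constructor
  · rintro ⟨h, h' | h'⟩ <;> exact ⟨h, by omega⟩
  · rintro ⟨h, h'⟩; exact ⟨h, Or.inl h'⟩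

lemma apex_adj_none_some (u : V) : (addApex G).Adj none (some u) := by
  simp [addApex, fromRel_adj]

lemma apex_adj_some_some {u v : V} :
    (addApex G).Adj (some u) (some v) ↔ G.Adj u v := by
  simp [addApex, fromRel_adj]
  constructor
  · rintro ⟨hne, h | h⟩
    · exact h
    · exact h.symm
  · intro h
    exact ⟨h.ne, Or.inl h⟩

/-- orientation-resolving function of a sequence of pairs -/
def wfun {k : ℕ} (q : Fin k → V × V) : Fin k × Bool → V :=
  fun p => if p.2 then (q p.1).2 else (q p.1).1

def TGood (G : SimpleGraph V) {k : ℕ} (q : Fin k → V × V) : Prop :=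
  (∀ i, G.Adj (q i).1 (q i).2) ∧ Function.Injective (wfun q)

/-- the vertex map determined by data `g` -/
def mkMap {k : ℕ} (g : Fin k → Fin 3 × V × V) : Fin k × Fin 3 → Option V :=
  fun p => if p.2 = (g p.1).1 then none
    else if p.2 = (g p.1).1 + 1 then some (g p.1).2.1 else some (g p.1).2.2

lemma fin3_cases : ∀ j t : Fin 3, j = t ∨ j = t + 1 ∨ j = t + 2 := by decide

lemma fin3_ne1 : ∀ t : Fin 3, t + 1 ≠ t := by decide
lemma fin3_ne2 : ∀ t : Fin 3, t + 2 ≠ t := by decide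
lemma fin3_ne12 : ∀ t : Fin 3, t + 1 ≠ t + 2 := by decide

lemma mkMap_apex {k : ℕ} (g : Fin k → Fin 3 × V × V) (i : Fin k) :
    mkMap g (i, (g i).1) = none := by simp [mkMap]

lemma mkMap_eq_none_iff {k : ℕ} (g : Fin k → Fin 3 × V × V) (i : Fin k) (j : Fin 3) :
    mkMap g (i, j) = none ↔ j = (g i).1 := by
  constructor
  · intro h
    by_contra hne
    unfold mkMap at h
    rw [if_neg hne] at h
    split_ifs at h <;> simp at h
  · intro h
    simp [mkMap, h]

lemma mkMap_u {k : ℕ} (g : Fin k → Fin 3 × V × V) (i : Fin k) :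
    mkMap g (i, (g i).1 + 1) = some (g i).2.1 := by
  simp [mkMap, fin3_ne1 (g i).1]

lemma mkMap_v {k : ℕ} (g : Fin k → Fin 3 × V × V) (i : Fin k) :
    mkMap g (i, (g i).1 + 2) = some (g i).2.2 := by
  simp [mkMap, fin3_ne2 (g i).1, (fin3_ne12 (g i).1).symm]

/-- mkMap lands in {w (i,false), w(i,true)} when not apex -/
lemma mkMap_key {k : ℕ} (g : Fin k → Fin 3 × V × V)
    (hw : Function.Injective (wfun (fun i => (g i).2)))
    {i i' : Fin k} {j j' : Fin 3}
    (h : mkMap g (i, j) = mkMap g (i', j')) :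
    ((i, j) = (i', j') ∨ (j = (g i).1 ∧ j' = (g i').1)) := by
  rcases fin3_cases j (g i).1 with hj | hj | hj <;>
    rcases fin3_cases j' (g i').1 with hj' | hj' | hj' <;>
      subst hj <;> subst hj'
  · exact Or.inr ⟨rfl, rfl⟩
  · rw [mkMap_apex, mkMap_u] at h; exact absurd h (by simp)
  · rw [mkMap_apex, mkMap_v] at h; exact absurd h (by simp)
  · rw [mkMap_u, mkMap_apex] at h; exact absurd h (by simp)
  · rw [mkMap_u, mkMap_u] at h
    have := hw (a₁ := (i, false)) (a₂ := (i', false)) (by simpa [wfun] using h)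
    simp only [Prod.mk.injEq] at this
    exact Or.inl (by rw [this.1])
  · rw [mkMap_u, mkMap_v] at h
    have := hw (a₁ := (i, false)) (a₂ := (i', true)) (by simpa [wfun] using h)
    simp at this
  · rw [mkMap_v, mkMap_apex] at h; exact absurd h (by simp)
  · rw [mkMap_v, mkMap_u] at h
    have := hw (a₁ := (i, true)) (a₂ := (i', false)) (by simpa [wfun] using h)
    simp at this
  · rw [mkMap_v, mkMap_v] at h
    have := hw (a₁ := (i, true)) (a₂ := (i', true)) (by simpa [wfun] using h)
    simp only [Prod.mk.injEq] at this
    exact Or.inl (by rw [this.1])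

/-- the homomorphism determined by good data -/
def mkHom {k : ℕ} (g : Fin k → Fin 3 × V × V)
    (hg : TGood G (fun i => (g i).2)) : trianglePacking k →g addApex G where
  toFun := mkMap g
  map_rel' := by
    rintro ⟨i, j⟩ ⟨i', j'⟩ hadj
    rw [tp_adj] at hadj
    obtain ⟨hne, hi⟩ := hadj
    simp only at hi
    subst hi
    have hjj' : j ≠ j' := fun h => hne (by rw [h])
    have hGadj := hg.1 i
    rcases fin3_cases j (g i).1 with hj | hj | hj <;>
      rcases fin3_cases j' (g i).1 with hj' | hj' | hj' <;>
        subst hj <;> subst hj' <;>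
      first
        | exact absurd rfl hjj'
        | (rw [mkMap_apex, mkMap_u]; exact apex_adj_none_some _)
        | (rw [mkMap_apex, mkMap_v]; exact apex_adj_none_some _)
        | (rw [mkMap_u, mkMap_apex]; exact (apex_adj_none_some _).symm)
        | (rw [mkMap_v, mkMap_apex]; exact (apex_adj_none_some _).symm)
        | (rw [mkMap_u, mkMap_v]; exact apex_adj_some_some.mpr hGadj)
        | (rw [mkMap_v, mkMap_u]; exact apex_adj_some_some.mpr hGadj.symm)

lemma mkHom_edgeInjective {k : ℕ} (g : Fin k → Fin 3 × V × V)
    (hg : TGood G (fun i => (g i).2)) : EdgeInjective (mkHom g hg) := by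
  intro e he f hf hmap
  induction e using Sym2.ind with
  | _ a b =>
  induction f using Sym2.ind with
  | _ a' b' =>
  rw [mem_edgeSet] at he hf
  have key : ∀ p p' : Fin k × Fin 3, mkMap g p = mkMap g p' →
      p = p' ∨ (p.2 = (g p.1).1 ∧ p'.2 = (g p'.1).1) := by
    rintro ⟨i, j⟩ ⟨i', j'⟩ h
    exact mkMap_key g hg.2 h
  have hA := tp_adj.mp he
  have hB := tp_adj.mp hf
  -- resolve: if two vertices of the same triangle are both apex positions, they are equal
  have resolve : ∀ x y x' y' : Fin k × Fin 3,
      (trianglePacking k).Adj x y → (trianglePacking k).Adj x' y' →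
      mkMap g x = mkMap g x' → mkMap g y = mkMap g y' → x = x' ∧ y = y' := by
    intro x y x' y' hxy hxy' h1 h2
    have hxy1 := (tp_adj.mp hxy).2
    have hxy'1 := (tp_adj.mp hxy').2
    rcases key x x' h1 with h | ⟨ha1, ha2⟩
    · rcases key y y' h2 with h' | ⟨hb1, hb2⟩
      · exact ⟨h, h'⟩
      · subst h
        have h1' : y.1 = y'.1 := by rw [← hxy1, ← hxy'1]
        exact ⟨rfl, Prod.ext_iff.mpr ⟨h1', by rw [hb1, hb2, h1']⟩⟩
    · rcases key y y' h2 with h' | ⟨hb1, hb2⟩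
      · subst h'
        have h1' : x.1 = x'.1 := by rw [hxy1, hxy'1]
        exact ⟨Prod.ext_iff.mpr ⟨h1', by rw [ha1, ha2, h1']⟩, rfl⟩
      · exfalso
        have : x = y := Prod.ext_iff.mpr ⟨hxy1, by rw [ha1, hb1, hxy1]⟩
        exact (tp_adj.mp hxy).1 this
  have hcoe : ⇑(mkHom g hg) = mkMap g := rfl
  rw [Sym2.map_pair_eq, Sym2.map_pair_eq, hcoe] at hmap
  rcases Sym2.eq_iff.mp hmap with ⟨h1, h2⟩ | ⟨h1, h2⟩
  · obtain ⟨hx, hy⟩ := resolve a b a' b' he hf h1 h2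
    rw [hx, hy]
  · obtain ⟨hx, hy⟩ := resolve a b b' a' he hf.symm h1 h2
    rw [hx, hy, Sym2.eq_swap]

lemma mkMap_inj {k : ℕ} (g g' : Fin k → Fin 3 × V × V)
    (h : mkMap g = mkMap g') : g = g' := by
  funext i
  have ht : (g i).1 = (g' i).1 := by
    have := mkMap_apex g i
    rw [h] at this
    exact (mkMap_eq_none_iff g' i _).mp this
  have hu : (g i).2.1 = (g' i).2.1 := by
    have h1 := mkMap_u g i
    have h2 := mkMap_u g' i
    rw [h, ht] at h1
    rw [h1] at h2
    exact Option.some_injective V h2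
  have hv : (g i).2.2 = (g' i).2.2 := by
    have h1 := mkMap_v g i
    have h2 := mkMap_v g' i
    rw [h, ht] at h1
    rw [h1] at h2
    exact Option.some_injective V h2
  exact Prod.ext_iff.mpr ⟨ht, Prod.ext_iff.mpr ⟨hu, hv⟩⟩

variable {k : ℕ}

lemma apex_exists (c : V → Bool) (hc : ∀ u v, G.Adj u v → c u ≠ c v)
    (φ : trianglePacking k →g addApex G) (i : Fin k) : ∃ j, φ (i, j) = none := by
  by_contra hcon
  push_neg at hcon
  obtain ⟨x0, h0⟩ := Option.ne_none_iff_exists'.mp (hcon 0)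
  obtain ⟨x1, h1⟩ := Option.ne_none_iff_exists'.mp (hcon 1)
  obtain ⟨x2, h2⟩ := Option.ne_none_iff_exists'.mp (hcon 2)
  have adj : ∀ j j' : Fin 3, j ≠ j' →
      (addApex G).Adj (φ (i, j)) (φ (i, j')) := fun j j' hne =>
    φ.map_rel (tp_adj.mpr ⟨by simp [hne], rfl⟩)
  have a01 : G.Adj x0 x1 := apex_adj_some_some.mp (h0 ▸ h1 ▸ adj 0 1 (by decide))
  have a12 : G.Adj x1 x2 := apex_adj_some_some.mp (h1 ▸ h2 ▸ adj 1 2 (by decide))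
  have a02 : G.Adj x0 x2 := apex_adj_some_some.mp (h0 ▸ h2 ▸ adj 0 2 (by decide))
  have c01 := hc _ _ a01
  have c12 := hc _ _ a12
  have c02 := hc _ _ a02
  cases hb0 : c x0 <;> cases hb1 : c x1 <;> cases hb2 : c x2 <;> simp_all

lemma apex_unique (φ : trianglePacking k →g addApex G) {i : Fin k} {j j' : Fin 3}
    (h : φ (i, j) = none) (h' : φ (i, j') = none) : j = j' := by
  by_contra hne
  have hadj := φ.map_rel ((tp_adj (a := (i,j)) (b := (i,j'))).mpr ⟨by simp [hne], rfl⟩)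
  rw [h, h'] at hadj
  exact hadj.ne rfl

lemma F1_surjective (c : V → Bool) (hc : ∀ u v, G.Adj u v → c u ≠ c v)
    (φ : trianglePacking k →g addApex G) (hEI : EdgeInjective φ) :
    ∃ g : Fin k → Fin 3 × V × V, ∃ hg : TGood G (fun i => (g i).2),
      (mkHom g hg : trianglePacking k →g addApex G) = φ := by
  classical
  -- apex position
  have hex := apex_exists c hc φ
  set t : Fin k → Fin 3 := fun i => (hex i).choose with ht
  have htspec : ∀ i, φ (i, t i) = none := fun i => (hex i).choose_spec
  have hne1 : ∀ i, φ (i, t i + 1) ≠ none := by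
    intro i h
    exact fin3_ne1 (t i) (apex_unique φ h (htspec i))
  have hne2 : ∀ i, φ (i, t i + 2) ≠ none := by
    intro i h
    exact fin3_ne2 (t i) (apex_unique φ h (htspec i))
  choose u hu using fun i => Option.ne_none_iff_exists'.mp (hne1 i)
  choose v hv using fun i => Option.ne_none_iff_exists'.mp (hne2 i)
  refine ⟨fun i => (t i, u i, v i), ⟨?_, ?_⟩, ?_⟩
  · intro i
    have hadj := φ.map_rel ((tp_adj (a := (i, t i + 1)) (b := (i, t i + 2))).mpr
      ⟨by simp [fin3_ne12 (t i)], rfl⟩)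
    rw [hu, hv] at hadj
    exact apex_adj_some_some.mp hadj
  · rintro ⟨i, b⟩ ⟨i', b'⟩ hw
    simp only [wfun] at hw
    -- positions
    have hpos : ∀ (i : Fin k) (b : Bool),
        φ (i, t i + (if b then 2 else 1)) = some (if b then v i else u i) := by
      intro i b
      cases b <;> simp [hu, hv]
    by_cases hii : i = i'
    · subst hii
      by_cases hbb : b = b'
      · rw [hbb]
      · exfalso
        have huv : u i = v i := by
          cases b <;> cases b' <;> simp_all
        have hadj := φ.map_rel ((tp_adj (a := (i, t i + 1)) (b := (i, t i + 2))).mpr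
          ⟨by simp [fin3_ne12 (t i)], rfl⟩)
        rw [hu, hv, huv] at hadj
        exact hadj.ne rfl
    · exfalso
      set p : Fin k × Fin 3 := (i, t i + (if b then 2 else 1)) with hp
      set p' : Fin k × Fin 3 := (i', t i' + (if b' then 2 else 1)) with hp'
      have hadjp : (trianglePacking k).Adj (i, t i) p := by
        rw [tp_adj, hp]
        cases b <;> exact ⟨by simp [(fin3_ne1 (t i)).symm, (fin3_ne2 (t i)).symm], rfl⟩
      have hadjp' : (trianglePacking k).Adj (i', t i') p' := by
        rw [tp_adj, hp']
        cases b' <;> exact ⟨by simp [(fin3_ne1 (t i')).symm, (fin3_ne2 (t i')).symm], rfl⟩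
      have he : s((i, t i), p) ∈ (trianglePacking k).edgeSet := ((trianglePacking k).mem_edgeSet).mpr hadjp
      have hf : s((i', t i'), p') ∈ (trianglePacking k).edgeSet := ((trianglePacking k).mem_edgeSet).mpr hadjp'
      have hmap : Sym2.map φ s((i, t i), p) = Sym2.map φ s((i', t i'), p') := by
        rw [Sym2.map_pair_eq, Sym2.map_pair_eq, htspec, htspec, hpos, hpos]
        cases b <;> cases b' <;> simp_all
      have := hEI _ he _ hf hmap
      rcases Sym2.eq_iff.mp this with ⟨h1, -⟩ | ⟨h1, -⟩
      · exact hii (congrArg Prod.fst h1)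
      · exact hii (congrArg Prod.fst h1)
  · apply DFunLike.ext
    intro p
    obtain ⟨i, j⟩ := p
    show mkMap (fun i => (t i, u i, v i)) (i, j) = φ (i, j)
    rcases fin3_cases j (t i) with hj | hj | hj <;> subst hj
    · rw [show ((t i : Fin 3)) = ((fun i => (t i, u i, v i)) i).1 from rfl, mkMap_apex]
      exact (htspec i).symm
    · rw [show ((t i + 1 : Fin 3)) = ((fun i => (t i, u i, v i)) i).1 + 1 from rfl, mkMap_u]
      exact (hu i).symm
    · rw [show ((t i + 2 : Fin 3)) = ((fun i => (t i, u i, v i)) i).1 + 2 from rfl, mkMap_v]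
      exact (hv i).symm

section OrderPart
variable [LinearOrder V]

noncomputable def pick : Sym2 V → V × V :=
  Sym2.lift ⟨fun x y => if x ≤ y then (x, y) else (y, x), by
    intro x y
    rcases le_or_gt x y with h | h
    · rcases le_or_gt y x with h' | h'
      · simp [h, h', le_antisymm h h']
      · simp [h, not_le.mpr h']
    · simp [not_le.mpr h, h.le]⟩

lemma pick_mk (x y : V) : pick s(x, y) = if x ≤ y then (x, y) else (y, x) :=
  Sym2.lift_mk _ x y

lemma mk_pick (e : Sym2 V) : s((pick e).1, (pick e).2) = e := by
  induction e using Sym2.ind with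
  | _ x y =>
    rw [pick_mk]
    split_ifs <;> simp [Sym2.eq_swap]

lemma pick_ne {e : Sym2 V} (he : e ∈ G.edgeSet) : (pick e).1 ≠ (pick e).2 := by
  induction e using Sym2.ind with
  | _ x y =>
    have hxy : x ≠ y := (G.mem_edgeSet.mp he).ne
    rw [pick_mk]
    split_ifs <;> simp [hxy, hxy.symm]

def orient (b : Bool) (p : V × V) : V × V := if b then p.swap else p

variable [LinearOrder (Sym2 V)]

lemma mk_orient (b : Bool) (p : V × V) :
    s((orient b p).1, (orient b p).2) = s(p.1, p.2) := by
  cases b <;> simp [orient, Sym2.eq_swap]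

variable (G) in
/-- the matching-count subtype -/
def MSub (k : ℕ) := {M : Finset (Sym2 V) // M.card = k ∧ ↑M ⊆ G.edgeSet ∧
    ∀ e ∈ M, ∀ f ∈ M, e ≠ f → ∀ x, x ∈ e → x ∉ f}

variable (G k) in
noncomputable def F2 (d : MSub G k × Equiv.Perm (Fin k) × (Fin k → Bool)) :
    Fin k → V × V :=
  fun i => orient (d.2.2 i) (pick ((d.1.1.orderIsoOfFin d.1.2.1 (d.2.1 i)) : Sym2 V))

lemma F2_edge (d : MSub G k × Equiv.Perm (Fin k) × (Fin k → Bool)) (i : Fin k) :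
    s((F2 G k d i).1, (F2 G k d i).2) =
      ((d.1.1.orderIsoOfFin d.1.2.1 (d.2.1 i)) : Sym2 V) := by
  rw [F2, mk_orient, mk_pick]

lemma F2_good (d : MSub G k × Equiv.Perm (Fin k) × (Fin k → Bool)) :
    TGood G (F2 G k d) := by
  obtain ⟨⟨M, hcard, hsub, hdisj⟩, σ, b⟩ := d
  have hmem : ∀ i : Fin k, s((F2 G k ⟨⟨M, hcard, hsub, hdisj⟩, σ, b⟩ i).1,
      (F2 G k ⟨⟨M, hcard, hsub, hdisj⟩, σ, b⟩ i).2) ∈ M := by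
    intro i
    rw [F2_edge]
    exact (M.orderIsoOfFin hcard (σ i)).2
  constructor
  · intro i
    exact (G.mem_edgeSet).mp (hsub (hmem i))
  · rintro ⟨i, b0⟩ ⟨i', b0'⟩ hw
    simp only [wfun] at hw
    set q := F2 G k ⟨⟨M, hcard, hsub, hdisj⟩, σ, b⟩ with hq
    have hadj : ∀ i : Fin k, G.Adj (q i).1 (q i).2 := fun i =>
      (G.mem_edgeSet).mp (hsub (hmem i))
    have hedge : ∀ (i : Fin k) (c : Bool), (if c then (q i).2 else (q i).1) ∈
        s((q i).1, (q i).2) := by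
      intro i c
      cases c
      · exact Sym2.mem_mk_left _ _
      · exact Sym2.mem_mk_right _ _
    have heq : s((q i).1, (q i).2) = s((q i').1, (q i').2) := by
      by_contra hne
      exact hdisj _ (hmem i) _ (hmem i') hne _ (hw ▸ hedge i b0) (hedge i' b0')
    have hii : i = i' := by
      rw [F2_edge, F2_edge] at heq
      have := RelIso.injective (M.orderIsoOfFin hcard) (Subtype.ext heq)
      exact σ.injective this
    subst hii
    by_cases hbb : b0 = b0'
    · rw [hbb]
    · exfalso
      have : (q i).1 = (q i).2 := by
        cases b0 <;> cases b0' <;> simp_all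
      exact (hadj i).ne this

lemma F2_injective : Function.Injective (F2 G k) := by
  rintro ⟨⟨M, hM⟩, σ, b⟩ ⟨⟨M', hM'⟩, σ', b'⟩ heq
  set q := F2 G k (⟨⟨M, hM⟩, σ, b⟩) with hq
  have hedge : ∀ i : Fin k, s((q i).1, (q i).2) =
      ((M.orderIsoOfFin hM.1 (σ i)) : Sym2 V) := fun i => F2_edge _ i
  have hedge' : ∀ i : Fin k, s((q i).1, (q i).2) =
      ((M'.orderIsoOfFin hM'.1 (σ' i)) : Sym2 V) := by
    intro i
    rw [heq]
    exact F2_edge _ i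
  -- M = M'
  have hMM : M = M' := by
    ext e
    constructor
    · intro he
      obtain ⟨x, hx⟩ := RelIso.surjective (M.orderIsoOfFin hM.1) ⟨e, he⟩
      have : s((q (σ.symm x)).1, (q (σ.symm x)).2) = e := by
        rw [hedge (σ.symm x), σ.apply_symm_apply, hx]
      rw [← this, hedge' (σ.symm x)]
      exact (M'.orderIsoOfFin hM'.1 (σ' (σ.symm x))).2
    · intro he
      obtain ⟨x, hx⟩ := RelIso.surjective (M'.orderIsoOfFin hM'.1) ⟨e, he⟩
      have : s((q (σ'.symm x)).1, (q (σ'.symm x)).2) = e := by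
        rw [hedge' (σ'.symm x), σ'.apply_symm_apply, hx]
      rw [← this, hedge (σ'.symm x)]
      exact (M.orderIsoOfFin hM.1 (σ (σ'.symm x))).2
  subst hMM
  have hMeq : (⟨M, hM⟩ : MSub G k) = ⟨M, hM'⟩ := rfl
  have hσ : σ = σ' := by
    apply Equiv.ext
    intro i
    have h1 := hedge i
    have h2 := hedge' i
    rw [h1] at h2
    exact RelIso.injective (M.orderIsoOfFin hM.1) (Subtype.ext h2)
  subst hσ
  have hb : b = b' := by
    funext i
    by_contra hbb
    have h1 : q i = orient (b i) (pick ((M.orderIsoOfFin hM.1 (σ i)) : Sym2 V)) := rfl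
    have h2 : q i = orient (b' i) (pick ((M.orderIsoOfFin hM.1 (σ i)) : Sym2 V)) := by
      rw [heq]; rfl
    have hne := pick_ne (G := G)
      (e := ((M.orderIsoOfFin hM.1 (σ i)) : Sym2 V)) (hM.2.1 (M.orderIsoOfFin hM.1 (σ i)).2)
    set p := pick ((M.orderIsoOfFin hM.1 (σ i)) : Sym2 V)
    have : orient (b i) p = orient (b' i) p := by rw [← h1, h2]
    cases hb1 : b i <;> cases hb2 : b' i <;> simp_all [orient, Prod.ext_iff]
  subst hb
  rfl

lemma F2_surjective (q : Fin k → V × V) (hq : TGood G q) :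
    ∃ d, F2 G k d = q := by
  classical
  obtain ⟨hadj, hinj⟩ := hq
  set edge : Fin k → Sym2 V := fun i => s((q i).1, (q i).2) with hedge
  have edge_inj : Function.Injective edge := by
    intro i i' h
    rw [hedge] at h
    simp only [Sym2.eq_iff] at h
    rcases h with ⟨h1, -⟩ | ⟨h1, -⟩
    · exact congrArg Prod.fst (hinj (a₁ := (i, false)) (a₂ := (i', false)) (by simpa [wfun] using h1))
    · exact congrArg Prod.fst (hinj (a₁ := (i, false)) (a₂ := (i', true)) (by simpa [wfun] using h1))
  set M : Finset (Sym2 V) := Finset.image edge Finset.univ with hMdef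
  have hmemM : ∀ e, e ∈ M ↔ ∃ i, edge i = e := by
    intro e
    simp [hMdef]
  have hcard : M.card = k := by
    rw [hMdef, Finset.card_image_of_injective _ edge_inj, Finset.card_univ, Fintype.card_fin]
  have hsub : ↑M ⊆ G.edgeSet := by
    intro e he
    obtain ⟨i, hi⟩ := (hmemM e).mp he
    rw [← hi, hedge]
    exact (G.mem_edgeSet).mpr (hadj i)
  have hwmem : ∀ (i : Fin k) (c : Bool), wfun q (i, c) ∈ edge i := by
    intro i c
    cases c
    · exact Sym2.mem_mk_left _ _
    · exact Sym2.mem_mk_right _ _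
  have hvertex : ∀ (i i' : Fin k) (x : V), x ∈ edge i → x ∈ edge i' → i = i' := by
    intro i i' x hx hx'
    rw [hedge, Sym2.mem_iff] at hx hx'
    have : ∃ c c' : Bool, wfun q (i, c) = wfun q (i', c') := by
      rcases hx with h | h <;> rcases hx' with h' | h'
      · exact ⟨false, false, by simp [wfun, ← h, ← h']⟩
      · exact ⟨false, true, by simp [wfun, ← h, ← h']⟩
      · exact ⟨true, false, by simp [wfun, ← h, ← h']⟩
      · exact ⟨true, true, by simp [wfun, ← h, ← h']⟩
    obtain ⟨c, c', hcc⟩ := this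
    exact congrArg Prod.fst (hinj hcc)
  have hdisj : ∀ e ∈ M, ∀ f ∈ M, e ≠ f → ∀ x, x ∈ e → x ∉ f := by
    intro e he f hf hef x hxe hxf
    obtain ⟨i, hi⟩ := (hmemM e).mp he
    obtain ⟨i', hi'⟩ := (hmemM f).mp hf
    apply hef
    rw [← hi, ← hi', hvertex i i' x (hi ▸ hxe) (hi' ▸ hxf)]
  -- the permutation
  set σ0 : Fin k → Fin k := fun i => RelIso.symm (M.orderIsoOfFin hcard) ⟨edge i, (hmemM _).mpr ⟨i, rfl⟩⟩
    with hσ0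
  have hσ0inj : Function.Injective σ0 := by
    intro i i' h
    rw [hσ0] at h
    have := RelIso.injective (RelIso.symm (M.orderIsoOfFin hcard)) h
    exact edge_inj (congrArg Subtype.val this)
  have hσ0bij := Finite.injective_iff_bijective.mp hσ0inj
  set σ : Equiv.Perm (Fin k) := Equiv.ofBijective σ0 hσ0bij with hσ
  set b : Fin k → Bool := fun i => decide ((q i).2 < (q i).1) with hb
  refine ⟨⟨⟨M, hcard, hsub, hdisj⟩, σ, b⟩, ?_⟩
  funext i
  have h1 : ((M.orderIsoOfFin hcard (σ i)) : Sym2 V) = edge i := by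
    rw [hσ]
    show ((M.orderIsoOfFin hcard (σ0 i)) : Sym2 V) = edge i
    rw [hσ0, RelIso.apply_symm_apply]
  show orient (b i) (pick ((M.orderIsoOfFin hcard (σ i)) : Sym2 V)) = q i
  rw [h1, hedge, pick_mk]
  have hne : (q i).1 ≠ (q i).2 := (hadj i).ne
  rcases lt_or_gt_of_ne hne with hlt | hlt
  · rw [if_pos hlt.le, hb]
    simp [orient, not_lt.mpr hlt.le]
  · rw [if_neg (not_le.mpr hlt), hb]
    simp [orient, hlt]

end OrderPart

end Aux

/-- For a bipartite graph `G` and its apex extension `G'`, the number of edge-injective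
homomorphisms from the triangle packing `k·K₃` into `G'` is `6^k · k! · m_k(G)`. -/
theorem edgeInjective_trianglePacking_into_apex_bipartite
    {V : Type*} [Fintype V] (G : SimpleGraph V) (c : V → Bool)
    (hc : ∀ u v, G.Adj u v → c u ≠ c v) (k : ℕ) :
    Nat.card {φ : trianglePacking k →g addApex G // EdgeInjective φ} =
      6 ^ k * k.factorial * kMatchingCount G k := by
  classical
  letI : LinearOrder V := LinearOrder.lift' (Fintype.equivFin V) (Fintype.equivFin V).injective
  letI : LinearOrder (Sym2 V) :=
    LinearOrder.lift' (Fintype.equivFin (Sym2 V)) (Fintype.equivFin (Sym2 V)).injective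
  -- Step 1 : homs ↔ data
  have h1 : Nat.card {g : Fin k → Fin 3 × V × V // TGood G (fun i => (g i).2)} =
      Nat.card {φ : trianglePacking k →g addApex G // EdgeInjective φ} := by
    apply Nat.card_eq_of_bijective
      (fun g => ⟨mkHom g.1 g.2, mkHom_edgeInjective g.1 g.2⟩)
    constructor
    · rintro ⟨g, hg⟩ ⟨g', hg'⟩ h
      have hmaps : mkMap g = mkMap g' :=
        congrArg DFunLike.coe (congrArg Subtype.val h)
      exact Subtype.ext (mkMap_inj g g' hmaps)
    · rintro ⟨φ, hEI⟩
      obtain ⟨g, hg, hφ⟩ := F1_surjective c hc φ hEI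
      exact ⟨⟨g, hg⟩, Subtype.ext hφ⟩
  -- Step 2 : data ≃ (Fin k → Fin 3) × T
  have e2 : {g : Fin k → Fin 3 × V × V // TGood G (fun i => (g i).2)} ≃
      (Fin k → Fin 3) × {q : Fin k → V × V // TGood G q} :=
    { toFun := fun g => (fun i => (g.1 i).1, ⟨fun i => (g.1 i).2, g.2⟩)
      invFun := fun d => ⟨fun i => (d.1 i, d.2.1 i), d.2.2⟩
      left_inv := fun g => rfl
      right_inv := fun d => rfl }
  -- Step 3 : T ↔ matchings × perms × orientations
  have h3 : Nat.card ((MSub G k) × Equiv.Perm (Fin k) × (Fin k → Bool)) =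
      Nat.card {q : Fin k → V × V // TGood G q} := by
    apply Nat.card_eq_of_bijective (fun d => ⟨F2 G k d, F2_good d⟩)
    constructor
    · intro d d' h
      exact F2_injective (congrArg Subtype.val h)
    · rintro ⟨q, hq⟩
      obtain ⟨d, hd⟩ := F2_surjective q hq
      exact ⟨d, Subtype.ext hd⟩
  rw [← h1, Nat.card_congr e2, Nat.card_prod, ← h3, Nat.card_prod, Nat.card_prod]
  have hm : Nat.card (MSub G k) = kMatchingCount G k := rfl
  rw [hm]
  simp only [Nat.card_eq_fintype_card, Fintype.card_fun, Fintype.card_fin, Fintype.card_perm,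
    Fintype.card_bool]
  have h6 : (6 : ℕ) ^ k = 3 ^ k * 2 ^ k := by rw [← Nat.mul_pow]
  rw [h6]
  ring
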